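/- For any x ∈ R^d, matrices K, K' ∈ R^{k×d}, symmetric positive definite R + B^T P_K B, and E_K = (R + B^T P_K B)K − B^T P_K A, the quadratic A_{K,K'}(x) = 2 x^T (K'−K)^T E_K x + x^T (K'−K)^T (R + B^T P_K B)(K'−K) x satisfies A_{K,K'}(x) ≥ − tr(x x^T E_K^T (R + B^T P_K B)^{-1} E_K), with equality when K' = K − (R + B^T P_K B)^{-1} E_K. -/

import Mathlib

open Matrix

lemma trace_vecMulVec_mul (n :ℕ) (x : Fin n → ℝ) (M : Matrix (Fin n) (Fin n) ℝ) :
    (Matrix.vecMulVec x x * M).trace = x ⬝ᵥ M *ᵥ x := by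
  simp only [trace, diag_apply, vecMulVec, mul_apply, dotProduct, mulVec, of_apply]
  rw [Finset.sum_comm]
  simp [Finset.mul_sum, mul_comm, mul_left_comm]

lemma key (n:ℕ) (W : Matrix (Fin n) (Fin n) ℝ) (hW : W.PosDef) (u e : Fin n → ℝ) :
    2*(u ⬝ᵥ e) + u ⬝ᵥ W *ᵥ u + e ⬝ᵥ W⁻¹ *ᵥ e
      = (u + W⁻¹ *ᵥ e) ⬝ᵥ W *ᵥ (u + W⁻¹ *ᵥ e) := by
  have hdet : IsUnit W.det := hW.det_pos.ne'.isUnit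
  have hinv : W * W⁻¹ = 1 := mul_nonsing_inv _ hdet
  have hWs : Wᵀ = W := hW.1
  have h1 : W *ᵥ (W⁻¹ *ᵥ e) = e := by rw [mulVec_mulVec, hinv, one_mulVec]
  have h2 : (W⁻¹ *ᵥ e) ⬝ᵥ (W *ᵥ u) = e ⬝ᵥ u := by
    rw [dotProduct_mulVec, ← mulVec_transpose, hWs, h1]
  rw [mulVec_add, h1]
  simp only [add_dotProduct, dotProduct_add, h2]
  rw [dotProduct_comm e u, dotProduct_comm (W⁻¹ *ᵥ e) e]
  ring

lemma main_aux (d k : ℕ) (M EK : Matrix (Fin k) (Fin d) ℝ)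
    (W : Matrix (Fin k) (Fin k) ℝ) (hW : W.PosDef) (x : Fin d → ℝ) :
    2*(x ⬝ᵥ (Mᵀ * EK) *ᵥ x) + x ⬝ᵥ (Mᵀ * W * M) *ᵥ x
      + (Matrix.vecMulVec x x * EKᵀ * W⁻¹ * EK).trace
      = (M *ᵥ x + W⁻¹ *ᵥ (EK *ᵥ x)) ⬝ᵥ W *ᵥ (M *ᵥ x + W⁻¹ *ᵥ (EK *ᵥ x)) := by
  have t1 : x ⬝ᵥ (Mᵀ * EK) *ᵥ x = (M *ᵥ x) ⬝ᵥ (EK *ᵥ x) := by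
    rw [← mulVec_mulVec, dotProduct_mulVec, vecMul_transpose]
  have t2 : x ⬝ᵥ (Mᵀ * W * M) *ᵥ x = (M *ᵥ x) ⬝ᵥ W *ᵥ (M *ᵥ x) := by
    rw [Matrix.mul_assoc, ← mulVec_mulVec, dotProduct_mulVec, vecMul_transpose, mulVec_mulVec]
  have t3 : (Matrix.vecMulVec x x * EKᵀ * W⁻¹ * EK).trace
      = (EK *ᵥ x) ⬝ᵥ W⁻¹ *ᵥ (EK *ᵥ x) := by
    rw [Matrix.mul_assoc, Matrix.mul_assoc, trace_vecMulVec_mul, ← mulVec_mulVec,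
      dotProduct_mulVec, vecMul_transpose, mulVec_mulVec]
  rw [t1, t2, t3, key _ W hW]

/-- completion of squares: with `W = R + Bᵀ P_K B ≻ 0` and
`E_K = W K − Bᵀ P_K A`, the quadratic
`A_{K,K'}(x) = 2 xᵀ(K'−K)ᵀ E_K x + xᵀ(K'−K)ᵀ W (K'−K) x` satisfies
`A_{K,K'}(x) ≥ − tr(x xᵀ E_Kᵀ W⁻¹ E_K)`, with equality when `K' = K − W⁻¹ E_K`. -/
theorem lqr_completion_of_squares
    (d k : ℕ) (A : Matrix (Fin d) (Fin d) ℝ) (B : Matrix (Fin d) (Fin k) ℝ)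
    (K K' : Matrix (Fin k) (Fin d) ℝ) (PK : Matrix (Fin d) (Fin d) ℝ)
    (R : Matrix (Fin k) (Fin k) ℝ)
    (hW : (R + Bᵀ * PK * B).PosDef)
    (EK : Matrix (Fin k) (Fin d) ℝ)
    (hEK : EK = (R + Bᵀ * PK * B) * K - Bᵀ * PK * A) :
    (∀ x : Fin d → ℝ,
        2 * (x ⬝ᵥ ((K' - K)ᵀ * EK) *ᵥ x) +
            x ⬝ᵥ ((K' - K)ᵀ * (R + Bᵀ * PK * B) * (K' - K)) *ᵥ x ≥
          -(Matrix.vecMulVec x x * EKᵀ * (R + Bᵀ * PK * B)⁻¹ * EK).trace) ∧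
    (K' = K - (R + Bᵀ * PK * B)⁻¹ * EK →
      ∀ x : Fin d → ℝ,
        2 * (x ⬝ᵥ ((K' - K)ᵀ * EK) *ᵥ x) +
            x ⬝ᵥ ((K' - K)ᵀ * (R + Bᵀ * PK * B) * (K' - K)) *ᵥ x =
          -(Matrix.vecMulVec x x * EKᵀ * (R + Bᵀ * PK * B)⁻¹ * EK).trace) := by
  set W := R + Bᵀ * PK * B with hWdef
  constructor
  · intro x
    have h := main_aux d k (K' - K) EK W hW x
    have hnn := hW.posSemidef.dotProduct_mulVec_nonneg ((K' - K) *ᵥ x + W⁻¹ *ᵥ (EK *ᵥ x))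
    simp only [star_trivial] at hnn
    linarith
  · intro hK' x
    have h := main_aux d k (K' - K) EK W hW x
    have hu : (K' - K) *ᵥ x = -(W⁻¹ *ᵥ (EK *ᵥ x)) := by
      rw [hK', sub_sub_cancel_left, neg_mulVec, mulVec_mulVec]
    rw [hu, neg_add_cancel] at h
    simp only [dotProduct_zero, mulVec_zero] at h
    linarith
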